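/- Let x̃ be an optimal solution of LP-(L0), i.e., a feasible solution whose objective value is minimal among all feasible solutions. Then Σ_{u≠v} ((1 − x̃^(t_{u,v})(u,v)) + x̃^(t_{u,v}+1)(u,v)) ≥ |NFbd|, where NFbd := {{u,v} : x̃^(t_{u,v})(u,v) < 1}. -/
import Mathlib


open Finset
open scoped Classical

private lemma min_tri {a b c ε : ℝ} (hε : 0 ≤ ε) (habc : a ≤ b + c) (hb : 0 ≤ b) (hc : 0 ≤ c) :
    min 1 ((1+ε)*a) ≤ min 1 ((1+ε)*b) + min 1 ((1+ε)*c) := by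
  have h1ε : (0:ℝ) ≤ 1 + ε := by linarith
  have hbn : (0:ℝ) ≤ min 1 ((1+ε)*b) := le_min one_pos.le (mul_nonneg h1ε hb)
  have hcn : (0:ℝ) ≤ min 1 ((1+ε)*c) := le_min one_pos.le (mul_nonneg h1ε hc)
  rcases le_total 1 ((1+ε)*b) with h | h
  · calc min 1 ((1+ε)*a) ≤ 1 := min_le_left _ _
      _ ≤ _ := by rw [min_eq_left h]; linarith
  · rcases le_total 1 ((1+ε)*c) with h' | h'
    · calc min 1 ((1+ε)*a) ≤ 1 := min_le_left _ _
        _ ≤ _ := by rw [min_eq_left h']; linarith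
    · have ha : min 1 ((1+ε)*a) ≤ (1+ε)*a := min_le_right _ _
      rw [min_eq_right h, min_eq_right h']
      nlinarith

/-- Feasibility for LP-(L0): each layer `t ∈ {1,…,ℓ}` carries a `[0,1]`-valued
function on unordered pairs (vanishing on the diagonal) satisfying the
triangle inequality, the values are monotone non-increasing bottom-up, and the
convention `x^(ℓ+1) := 0` holds. -/
def LPL0Feasible {V : Type*} (ℓ : ℕ) (x : ℕ → Sym2 V → ℝ) : Prop :=
  (∀ t ∈ Finset.Icc 1 ℓ, ∀ u : V, x t s(u, u) = 0) ∧
  (∀ t ∈ Finset.Icc 1 ℓ, ∀ u v p : V, x t s(u, v) ≤ x t s(u, p) + x t s(p, v)) ∧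
  (∀ t ∈ Finset.Icc 1 ℓ, ∀ e : Sym2 V, 0 ≤ x t e ∧ x t e ≤ 1) ∧
  (∀ t, 1 ≤ t → t < ℓ → ∀ e : Sym2 V, x (t + 1) e ≤ x t e) ∧
  (∀ e : Sym2 V, x (ℓ + 1) e = 0)

/-- The objective value of LP-(L0):
`Σ_{{u,v}, u≠v} ((1 − x^(t_{u,v}){u,v}) + x^(t_{u,v}+1){u,v})`. -/
noncomputable def LPL0Val {V : Type*} [Fintype V] [DecidableEq V]
    (tlay : Sym2 V → ℕ) (x : ℕ → Sym2 V → ℝ) : ℝ :=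
  ∑ e ∈ Finset.univ.filter (fun e : Sym2 V => ¬ e.IsDiag),
    ((1 - x (tlay e) e) + x (tlay e + 1) e)

/-- Any optimal solution `x̃` of LP-(L0) satisfies `Val(x̃) ≥ |NFbd|`, where
`NFbd = {{u,v} : x̃^(t_{u,v}){u,v} < 1}` is the set of non-forbidden pairs. -/
theorem stmt3 (V : Type*) [Fintype V] [DecidableEq V]
    (ℓ : ℕ) (hℓ : 1 ≤ ℓ)
    (tlay : Sym2 V → ℕ)
    (htrange : ∀ e : Sym2 V, ¬ e.IsDiag → tlay e ∈ Finset.Icc 1 ℓ)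
    (x : ℕ → Sym2 V → ℝ)
    (hfeas : LPL0Feasible ℓ x)
    (hopt : ∀ y : ℕ → Sym2 V → ℝ, LPL0Feasible ℓ y →
      LPL0Val tlay x ≤ LPL0Val tlay y) :
    (({e : Sym2 V | ¬ e.IsDiag ∧ x (tlay e) e < 1}).ncard : ℝ)
      ≤ LPL0Val tlay x := by
  classical
  obtain ⟨hdiag, htri, hbd, hmono, htop⟩ := hfeas
  set S : Finset (Sym2 V) := Finset.univ.filter (fun e : Sym2 V => ¬ e.IsDiag) with hS
  have htl : ∀ e ∈ S, tlay e ∈ Finset.Icc 1 ℓ := fun e he =>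
    htrange e (by simpa [hS] using he)
  have hx0 : ∀ e ∈ S, 0 ≤ x (tlay e) e := fun e he => (hbd _ (htl e he) e).1
  have hx1 : ∀ e ∈ S, x (tlay e) e ≤ 1 := fun e he => (hbd _ (htl e he) e).2
  have hnext0 : ∀ e ∈ S, 0 ≤ x (tlay e + 1) e := by
    intro e he
    rcases eq_or_lt_of_le (Finset.mem_Icc.1 (htl e he)).2 with h | h
    · rw [h, htop]
    · exact (hbd _ (Finset.mem_Icc.2 ⟨by omega, by omega⟩) e).1
  have hnextle : ∀ e ∈ S, x (tlay e + 1) e ≤ x (tlay e) e := by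
    intro e he
    rcases eq_or_lt_of_le (Finset.mem_Icc.1 (htl e he)).2 with h | h
    · rw [h, htop]
      have := hx0 e he; rwa [h] at this
    · exact hmono (tlay e) (Finset.mem_Icc.1 (htl e he)).1 h e
  set NF : Finset (Sym2 V) := S.filter (fun e => x (tlay e) e < 1) with hNF
  set F : Finset (Sym2 V) := S.filter (fun e => ¬ x (tlay e) e < 1) with hF
  have hFone : ∀ e ∈ F, x (tlay e) e = 1 := fun e he =>
    le_antisymm (hx1 e (Finset.mem_filter.1 he).1)
      (not_lt.1 (Finset.mem_filter.1 he).2)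
  have key : ∑ e ∈ NF, (x (tlay e) e - x (tlay e + 1) e) ≤ ∑ e ∈ F, x (tlay e + 1) e := by
    by_cases hne : NF.Nonempty
    · set M : ℝ := NF.sup' hne (fun e => x (tlay e) e) with hM
      have hM1 : M < 1 := (Finset.sup'_lt_iff hne).2 fun e he => (Finset.mem_filter.1 he).2
      set ε : ℝ := 1 - M with hε
      obtain ⟨e0, he0⟩ := hne
      have hM0 : 0 ≤ M := by
        refine le_trans (hx0 e0 (Finset.mem_filter.1 he0).1) ?_
        rw [hM]
        exact Finset.le_sup' (fun e => x (tlay e) e) he0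
      have hεpos : 0 < ε := by rw [hε]; linarith
      have h1ε : (0:ℝ) ≤ 1 + ε := by linarith
      have hclamp : ∀ e ∈ NF, (1+ε) * x (tlay e) e ≤ 1 := by
        intro e he
        have h1 := Finset.le_sup' (fun e => x (tlay e) e) he
        have h2 := hx0 e (Finset.mem_filter.1 he).1
        simp only [← hM] at h1
        rw [hε]
        nlinarith [sq_nonneg (1 - M)]
      set y : ℕ → Sym2 V → ℝ := fun t e => min 1 ((1+ε) * x t e) with hy
      have hyfeas : LPL0Feasible ℓ y := by
        refine ⟨?_, ?_, ?_, ?_, ?_⟩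
        · intro t ht u; simp [hy, hdiag t ht u]
        · intro t ht u v p
          exact min_tri hεpos.le (htri t ht u v p) (hbd t ht s(u,p)).1 (hbd t ht s(p,v)).1
        · intro t ht e
          exact ⟨le_min one_pos.le (mul_nonneg h1ε (hbd t ht e).1), min_le_left _ _⟩
        · intro t h1 h2 e
          exact min_le_min le_rfl (mul_le_mul_of_nonneg_left (hmono t h1 h2 e) h1ε)
        · intro e; simp [hy, htop e]
      have hopty := hopt y hyfeas
      have hpt : ∀ e ∈ S, (1 - y (tlay e) e) + y (tlay e + 1) e
          ≤ ((1 - x (tlay e) e) + x (tlay e + 1) e)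
            + (if x (tlay e) e < 1 then -(ε * (x (tlay e) e - x (tlay e + 1) e))
               else ε * x (tlay e + 1) e) := by
        intro e he
        have hy2 : y (tlay e + 1) e ≤ (1+ε) * x (tlay e + 1) e := min_le_right _ _
        by_cases hc : x (tlay e) e < 1
        · have hm : y (tlay e) e = (1+ε) * x (tlay e) e :=
            min_eq_right (hclamp e (Finset.mem_filter.2 ⟨he, hc⟩))
          simp only [if_pos hc]
          rw [hm]
          nlinarith
        · have hone : x (tlay e) e = 1 := le_antisymm (hx1 e he) (not_lt.1 hc)
          have h1le : (1:ℝ) ≤ (1+ε) * x (tlay e) e := by rw [hone]; linarith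
          have hm : y (tlay e) e = 1 := min_eq_left h1le
          simp only [if_neg hc]
          rw [hm, hone]
          linarith
      have hValy : LPL0Val tlay y
          ≤ LPL0Val tlay x
            + (∑ e ∈ NF, -(ε * (x (tlay e) e - x (tlay e + 1) e))
               + ∑ e ∈ F, ε * x (tlay e + 1) e) := by
        have h1 : LPL0Val tlay y ≤ ∑ e ∈ S,
            (((1 - x (tlay e) e) + x (tlay e + 1) e)
              + (if x (tlay e) e < 1 then -(ε * (x (tlay e) e - x (tlay e + 1) e))
                 else ε * x (tlay e + 1) e)) := by
          rw [LPL0Val, ← hS]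
          exact Finset.sum_le_sum hpt
        have h2 : ∑ e ∈ S, ((1 - x (tlay e) e) + x (tlay e + 1) e) = LPL0Val tlay x := by
          rw [LPL0Val, ← hS]
        rw [Finset.sum_add_distrib, Finset.sum_ite, ← hNF, ← hF, h2] at h1
        exact h1
      have hA : ∑ e ∈ NF, -(ε * (x (tlay e) e - x (tlay e + 1) e))
          = -(ε * ∑ e ∈ NF, (x (tlay e) e - x (tlay e + 1) e)) := by
        rw [Finset.mul_sum, ← Finset.sum_neg_distrib]
      have hB : ∑ e ∈ F, ε * x (tlay e + 1) e = ε * ∑ e ∈ F, x (tlay e + 1) e :=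
        (Finset.mul_sum _ _ _).symm
      rw [hA, hB] at hValy
      have hεle : ε * (∑ e ∈ NF, (x (tlay e) e - x (tlay e + 1) e))
          ≤ ε * ∑ e ∈ F, x (tlay e + 1) e := by linarith
      exact le_of_mul_le_mul_left hεle hεpos
    · rw [Finset.not_nonempty_iff_eq_empty] at hne
      rw [hne, Finset.sum_empty]
      exact Finset.sum_nonneg fun e he => hnext0 e (Finset.mem_filter.1 he).1
  have hset : {e : Sym2 V | ¬ e.IsDiag ∧ x (tlay e) e < 1} = (↑NF : Set (Sym2 V)) := by
    ext e
    simp [hNF, hS, and_comm]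
  rw [hset, Set.ncard_coe_finset]
  have hval : LPL0Val tlay x
      = ∑ e ∈ NF, ((1 - x (tlay e) e) + x (tlay e + 1) e)
        + ∑ e ∈ F, ((1 - x (tlay e) e) + x (tlay e + 1) e) := by
    rw [LPL0Val, ← hS, hNF, hF,
      Finset.sum_filter_add_sum_filter_not S (fun e => x (tlay e) e < 1)]
  have h1 : ∑ e ∈ NF, ((1 - x (tlay e) e) + x (tlay e + 1) e)
      = (NF.card : ℝ) - ∑ e ∈ NF, (x (tlay e) e - x (tlay e + 1) e) := by
    have : ∑ e ∈ NF, ((1 - x (tlay e) e) + x (tlay e + 1) e)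
        = ∑ e ∈ NF, ((1:ℝ) - (x (tlay e) e - x (tlay e + 1) e)) :=
      Finset.sum_congr rfl fun e _ => by ring
    rw [this, Finset.sum_sub_distrib, Finset.sum_const, nsmul_eq_mul, mul_one]
  have h2 : ∑ e ∈ F, ((1 - x (tlay e) e) + x (tlay e + 1) e)
      = ∑ e ∈ F, x (tlay e + 1) e :=
    Finset.sum_congr rfl fun e he => by rw [hFone e he]; ring
  rw [hval, h1, h2]
  linarith
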